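/- Define U₄ = F₂[c]/(1+c+c²) ⊕ F₂[c]/(1+c+c²)·x with c acting by multiplication and b acting by b·1 = 1, b·c = c², b·x = 1 + c·x (extended using bc = c²b). Then U₄ is a well-defined faithful 4-dimensional F₂-representation of Γ_Δ, and as a representation of the subgroup C₄ = ⟨b⟩ it is isomorphic to the regular representation F₂[b]/(b+1)⁴, via the map sending 1 ↦ 1+b+b²+b³, c ↦ 1+b², x ↦ 1, cx ↦ 1+b²+b³. -/

import Mathlib

open Polynomial

set_option synthInstance.maxHeartbeats 400000

/-- Relations for `Γ_Δ = C₃ ⋊ C₄ = ⟨c, b | c³ = 1, b⁴ = 1, bc = c²b⟩`,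
generators `c = of 0`, `b = of 1`. -/
def sdRels : Set (FreeGroup (Fin 2)) :=
  {FreeGroup.of 0 ^ 3, FreeGroup.of 1 ^ 4,
   FreeGroup.of 1 * FreeGroup.of 0 * (FreeGroup.of 0 ^ 2 * FreeGroup.of 1)⁻¹}

/-- `F₄ = F₂[c]/(1 + c + c²)`, the field with four elements. -/
noncomputable abbrev F4 : Type :=
  (ZMod 2)[X] ⧸ Ideal.span {(1 + X + X ^ 2 : (ZMod 2)[X])}

/-- The class of `c` in `F₄`. -/
noncomputable def gam : F4 :=
  Ideal.Quotient.mk (Ideal.span {(1 + X + X ^ 2 : (ZMod 2)[X])}) X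

/-- `R₄ = F₂[b]/(b+1)⁴`, the regular representation of `C₄` over `F₂`. -/
noncomputable abbrev R4 : Type :=
  (ZMod 2)[X] ⧸ Ideal.span {((X : (ZMod 2)[X]) + 1) ^ 4}

/-- The class of `b` in `R₄`. -/
noncomputable def bbar : R4 :=
  Ideal.Quotient.mk (Ideal.span {((X : (ZMod 2)[X]) + 1) ^ 4}) X

set_option maxHeartbeats 1000000

lemma f4_monic : (1 + X + X ^ 2 : (ZMod 2)[X]).Monic := by
  monicity!

lemma f4_natDegree : (1 + X + X ^ 2 : (ZMod 2)[X]).natDegree = 2 := by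
  compute_degree!

lemma f4_degree : (1 + X + X ^ 2 : (ZMod 2)[X]).degree = 2 := by
  compute_degree!

lemma htwo : (2 : F4) = 0 := by
  have : ((2 : (ZMod 2)[X]) : (ZMod 2)[X]) = 0 := by
    rw [(map_ofNat Polynomial.C 2).symm, show (2 : ZMod 2) = 0 by decide, map_zero]
  calc (2 : F4) = Ideal.Quotient.mk _ (2 : (ZMod 2)[X]) := by rw [map_ofNat]
  _ = 0 := by rw [this, map_zero]

lemma hgam : gam ^ 2 + gam + 1 = 0 := by
  have : (Ideal.Quotient.mk (Ideal.span {(1 + X + X ^ 2 : (ZMod 2)[X])}))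
      (1 + X + X ^ 2) = 0 := by
    rw [Ideal.Quotient.eq_zero_iff_mem]
    exact Ideal.mem_span_singleton_self _
  calc gam ^ 2 + gam + 1 = (Ideal.Quotient.mk _) (1 + X + X ^ 2) := by
        simp [gam, map_add, map_pow]; ring
  _ = 0 := this

lemma gam3 : gam ^ 3 = 1 := by linear_combination (gam - 1) * hgam

instance : Nontrivial F4 := by
  apply Ideal.Quotient.nontrivial_iff.mpr
  rw [Ne, Ideal.span_singleton_eq_top]
  intro h
  have := Polynomial.degree_eq_zero_of_isUnit h
  rw [f4_degree] at this
  norm_num at this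

lemma sq_add (a b : F4) : (a + b) ^ 2 = a ^ 2 + b ^ 2 := by
  linear_combination a * b * htwo

lemma gam_ne_one : gam ≠ 1 := by
  intro h
  exact one_ne_zero (α := F4) (by linear_combination hgam - (gam + 2) * h - htwo)

lemma gam_ne_zero : gam ≠ 0 := by
  intro h
  exact one_ne_zero (α := F4) (by linear_combination hgam - (gam + 1) * h)

lemma gam_sq_ne_one : gam ^ 2 ≠ 1 := by
  intro h
  have h0 : gam = 0 := by linear_combination hgam - h - htwo
  exact gam_ne_zero h0

lemma gam_unit : IsUnit gam :=
  IsUnit.of_mul_eq_one (a := gam) (gam ^ 2) (by linear_combination gam3)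

lemma gam_pow_ne_zero (k : ℕ) : gam ^ k ≠ 0 := (gam_unit.pow k).ne_zero

/-- every element of `F4` is an `F₂`-combination of `1` and `gam`. -/
lemma decompF4 (u : F4) : ∃ a b : ZMod 2, u = a • 1 + b • gam := by
  obtain ⟨p, rfl⟩ := Ideal.Quotient.mk_surjective (I := Ideal.span
      {(1 + X + X ^ 2 : (ZMod 2)[X])}) u
  have hmk : Ideal.Quotient.mk (Ideal.span {(1 + X + X ^ 2 : (ZMod 2)[X])}) p
      = Ideal.Quotient.mk _ (p %ₘ (1 + X + X ^ 2)) := by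
    rw [Ideal.Quotient.eq]
    have := Polynomial.modByMonic_add_div p (1 + X + X ^ 2)
    have h2 : p - p %ₘ (1 + X + X ^ 2)
        = (1 + X + X ^ 2) * (p /ₘ (1 + X + X ^ 2)) := by linear_combination -this
    rw [h2]
    exact Ideal.mem_span_singleton.2 ⟨_, rfl⟩
  have hdeg : (p %ₘ (1 + X + X ^ 2)).natDegree ≤ 1 := by
    have := Polynomial.natDegree_modByMonic_lt p f4_monic (by
      intro h
      have := congrArg Polynomial.natDegree h
      rw [f4_natDegree, Polynomial.natDegree_one] at this
      norm_num at this)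
    rw [f4_natDegree] at this
    omega
  obtain ⟨a, b, hab⟩ := Polynomial.exists_eq_X_add_C_of_natDegree_le_one hdeg
  refine ⟨b, a, ?_⟩
  rw [hmk, hab]
  have hC : ∀ a : ZMod 2, Ideal.Quotient.mk
      (Ideal.span {(1 + X + X ^ 2 : (ZMod 2)[X])}) (Polynomial.C a)
      = a • (1 : F4) := by
    intro a
    rcases (by fin_cases a <;> [exact Or.inl rfl; exact Or.inr rfl] : a = 0 ∨ a = 1) with rfl | rfl <;> simp
  rw [map_add, map_mul, hC, hC]
  rw [show Ideal.Quotient.mk (Ideal.span {(1 + X + X ^ 2 : (ZMod 2)[X])}) X = gam from rfl]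
  rw [smul_mul_assoc, one_mul]
  ring

lemma zmod2_cases (r : ZMod 2) : r = 0 ∨ r = 1 := by fin_cases r <;> [exact Or.inl rfl; exact Or.inr rfl]

lemma pow4 (u : F4) : u ^ 4 = u := by
  obtain ⟨a, b, rfl⟩ := decompF4 u
  rcases zmod2_cases a with rfl | rfl <;> rcases zmod2_cases b with rfl | rfl <;>
    simp only [zero_smul, one_smul, zero_add, add_zero]
  · simp
  · linear_combination gam * gam3
  · simp
  · linear_combination gam * gam3 + (2 * gam ^ 3 + 3 * gam ^ 2 + 2 * gam) * htwo

/-- the `F₂`-linear map `c` on `F4 × F4`. -/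
noncomputable def cB : Module.End (ZMod 2) (F4 × F4) where
  toFun z := (gam * z.1, gam * z.2)
  map_add' z w := by simp only [Prod.fst_add, Prod.snd_add, mul_add, Prod.mk_add_mk]
  map_smul' r z := by rcases zmod2_cases r with rfl | rfl <;> simp

/-- the `F₂`-linear map `b` on `F4 × F4`. -/
noncomputable def bB : Module.End (ZMod 2) (F4 × F4) where
  toFun z := (z.1 ^ 2 + z.2 ^ 2, gam * z.2 ^ 2)
  map_add' z w := by
    simp only [Prod.fst_add, Prod.snd_add, Prod.mk_add_mk, Prod.mk.injEq]
    constructor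
    · linear_combination (z.1 * w.1 + z.2 * w.2) * htwo
    · linear_combination gam * z.2 * w.2 * htwo
  map_smul' r z := by rcases zmod2_cases r with rfl | rfl <;> simp

@[simp] lemma cB_apply (u v : F4) : cB (u, v) = (gam * u, gam * v) := rfl
@[simp] lemma bB_apply (u v : F4) : bB (u, v) = (u ^ 2 + v ^ 2, gam * v ^ 2) := rfl

lemma cB_pow3 : cB ^ 3 = 1 := by
  apply LinearMap.ext
  rintro ⟨u, v⟩
  simp only [pow_succ, pow_zero, one_mul, Module.End.mul_apply, Module.End.one_apply, cB_apply,
    Prod.mk.injEq]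
  constructor
  · linear_combination u * gam3
  · linear_combination v * gam3

lemma bB_sq (u v : F4) : bB (bB (u, v)) = (u + gam * v, v) := by
  simp only [bB_apply, Prod.mk.injEq]
  constructor
  · linear_combination (pow4 u) + (1 + gam ^ 2) * (pow4 v) + v * hgam - gam * v * htwo + u ^ 2 * v ^ 2 * htwo
  · linear_combination v ^ 4 * gam3 + pow4 v

lemma bB_pow4 : bB ^ 4 = 1 := by
  apply LinearMap.ext
  rintro ⟨u, v⟩
  have h : (bB ^ 4) (u, v) = bB (bB (bB (bB (u, v)))) := by
    simp only [pow_succ, pow_zero, one_mul, Module.End.mul_apply]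
  rw [h, bB_sq, bB_sq]
  simp only [Module.End.one_apply, Prod.mk.injEq]
  exact ⟨by linear_combination gam * v * htwo, trivial⟩

lemma bB_cB : bB * cB = cB ^ 2 * bB := by
  apply LinearMap.ext
  rintro ⟨u, v⟩
  simp only [pow_succ, pow_zero, one_mul, Module.End.mul_apply, cB_apply, bB_apply,
    Prod.mk.injEq]
  constructor <;> ring

lemma g4_monic : (((X : (ZMod 2)[X]) + 1) ^ 4).Monic := by monicity!

lemma g4_natDegree : (((X : (ZMod 2)[X]) + 1) ^ 4).natDegree = 4 := by compute_degree!

lemma end_add_self (T : Module.End (ZMod 2) (F4 × F4)) : T + T = 0 := by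
  apply LinearMap.ext
  intro z
  show T z + T z = 0
  rw [← two_smul (ZMod 2) (T z), show (2 : ZMod 2) = 0 from rfl, zero_smul]

lemma end_sq_add_one (T : Module.End (ZMod 2) (F4 × F4)) : (T + 1) ^ 2 = T ^ 2 + 1 := by
  have h : (T + 1) * (T + 1) = T * T + 1 := by
    rw [add_mul, mul_add, mul_add, mul_one, one_mul, one_mul]
    rw [add_assoc (T*T), ← add_assoc T T 1, end_add_self, zero_add]
  calc (T + 1) ^ 2 = (T + 1) * (T + 1) := sq (T + 1)
  _ = T * T + 1 := h
  _ = T ^ 2 + 1 := by rw [← sq T]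

lemma key : Polynomial.aeval bB (((X : (ZMod 2)[X]) + 1) ^ 4) = 0 := by
  rw [map_pow, map_add, Polynomial.aeval_X, map_one]
  rw [show (4 : ℕ) = 2 * 2 from rfl, pow_mul, end_sq_add_one, end_sq_add_one,
    ← pow_mul, show (2 * 2 : ℕ) = 4 from rfl, bB_pow4]
  exact end_add_self 1

/-- The algebra map `R4 → End (F4 × F4)`, sending `bbar` to `bB`. -/
noncomputable def chi : R4 →ₐ[ZMod 2] Module.End (ZMod 2) (F4 × F4) :=
  Ideal.Quotient.liftₐ _ (Polynomial.aeval bB) (by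
    intro p hp
    rw [Ideal.mem_span_singleton] at hp
    obtain ⟨q, rfl⟩ := hp
    rw [map_mul, key, zero_mul])

lemma chi_mk (p : (ZMod 2)[X]) :
    chi (Ideal.Quotient.mk (Ideal.span {((X : (ZMod 2)[X]) + 1) ^ 4}) p)
      = Polynomial.aeval bB p := by
  simp [chi, Ideal.Quotient.liftₐ_apply]; rfl

lemma chi_bbar : chi bbar = bB := by
  rw [bbar, chi_mk, Polynomial.aeval_X]

/-- Evaluation of `chi` at `(0, 1)`. -/
noncomputable def e0 : R4 →ₗ[ZMod 2] F4 × F4 :=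
  (LinearMap.applyₗ ((0 : F4), (1 : F4))).comp chi.toLinearMap

lemma e0_apply (r : R4) : e0 r = chi r ((0 : F4), (1 : F4)) := rfl

lemma e0_mul (r : R4) : e0 (bbar * r) = bB (e0 r) := by
  rw [e0_apply, e0_apply, map_mul, chi_bbar, Module.End.mul_apply]

lemma e0_one : e0 1 = ((0 : F4), (1 : F4)) := by
  rw [e0_apply, map_one, Module.End.one_apply]

lemma e0_b : e0 bbar = ((1 : F4), gam) := by
  rw [show bbar = bbar * 1 from (mul_one _).symm, e0_mul, e0_one, bB_apply]
  norm_num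

lemma e0_b2 : e0 (bbar ^ 2) = (gam, (1 : F4)) := by
  rw [show bbar ^ 2 = bbar * bbar from sq bbar, e0_mul, e0_b, bB_apply]
  refine Prod.ext ?_ ?_ <;> simp only
  · linear_combination hgam - gam * htwo
  · linear_combination gam3

lemma e0_b3 : e0 (bbar ^ 3) = (gam, gam) := by
  rw [show bbar ^ 3 = bbar * bbar ^ 2 from by ring, e0_mul, e0_b2, bB_apply]
  refine Prod.ext ?_ ?_ <;> simp only
  · linear_combination hgam - gam * htwo
  · ring

noncomputable def pbF : PowerBasis (ZMod 2) F4 := AdjoinRoot.powerBasis' f4_monic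

noncomputable def pbR : PowerBasis (ZMod 2) R4 := AdjoinRoot.powerBasis' g4_monic

instance : Module.Finite (ZMod 2) F4 := Module.Finite.of_basis pbF.basis
instance : Module.Finite (ZMod 2) R4 := Module.Finite.of_basis pbR.basis

lemma finrank_F4 : Module.finrank (ZMod 2) F4 = 2 := by
  rw [pbF.finrank, pbF, AdjoinRoot.powerBasis'_dim, f4_natDegree]

lemma finrank_R4 : Module.finrank (ZMod 2) R4 = 4 := by
  rw [pbR.finrank, pbR, AdjoinRoot.powerBasis'_dim, g4_natDegree]

lemma finrank_prod_F4 : Module.finrank (ZMod 2) (F4 × F4) = 4 := by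
  rw [Module.finrank_prod, finrank_F4]

lemma e0_surjective : Function.Surjective e0 := by
  have h1 : ((1 : F4), (0 : F4)) ∈ LinearMap.range e0 := by
    refine ⟨1 + bbar + bbar ^ 2 + bbar ^ 3, ?_⟩
    rw [map_add, map_add, map_add, e0_one, e0_b, e0_b2, e0_b3]
    refine Prod.ext ?_ ?_ <;> simp only [Prod.fst_add, Prod.snd_add]
    · linear_combination gam * htwo
    · linear_combination (1 + gam) * htwo
  have h2 : (gam, (0 : F4)) ∈ LinearMap.range e0 := by
    refine ⟨1 + bbar ^ 2, ?_⟩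
    rw [map_add, e0_one, e0_b2]
    refine Prod.ext ?_ ?_ <;> simp only [Prod.fst_add, Prod.snd_add]
    · ring
    · linear_combination htwo
  have h3 : ((0 : F4), (1 : F4)) ∈ LinearMap.range e0 := ⟨1, e0_one⟩
  have h4 : ((0 : F4), gam) ∈ LinearMap.range e0 := by
    refine ⟨1 + bbar ^ 2 + bbar ^ 3, ?_⟩
    rw [map_add, map_add, e0_one, e0_b2, e0_b3]
    refine Prod.ext ?_ ?_ <;> simp only [Prod.fst_add, Prod.snd_add]
    · linear_combination gam * htwo
    · linear_combination htwo
  intro z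
  obtain ⟨a, b, hu⟩ := decompF4 z.1
  obtain ⟨c, d, hv⟩ := decompF4 z.2
  have hz : z = a • ((1 : F4), (0 : F4)) + b • (gam, (0 : F4))
      + c • ((0 : F4), (1 : F4)) + d • ((0 : F4), gam) := by
    refine Prod.ext ?_ ?_ <;>
      simp only [Prod.fst_add, Prod.snd_add, Prod.smul_fst, Prod.smul_snd, smul_zero,
        add_zero, zero_add]
    · rw [hu]
    · rw [hv]
  rw [hz]
  have := LinearMap.range e0 |>.add_mem (Submodule.add_mem _ (Submodule.add_mem _
    (Submodule.smul_mem _ a h1) (Submodule.smul_mem _ b h2)) (Submodule.smul_mem _ c h3))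
    (Submodule.smul_mem _ d h4)
  exact this

lemma e0_injective : Function.Injective e0 :=
  (LinearMap.injective_iff_surjective_of_finrank_eq_finrank
    (by rw [finrank_R4, finrank_prod_F4])).mpr e0_surjective

noncomputable def E : R4 ≃ₗ[ZMod 2] (F4 × F4) :=
  LinearEquiv.ofBijective e0 ⟨e0_injective, e0_surjective⟩

/-- `c` as a unit of the endomorphism ring. -/
noncomputable def Cu : (Module.End (ZMod 2) (F4 × F4))ˣ where
  val := cB
  inv := cB ^ 2
  val_inv := by rw [← pow_succ', cB_pow3]
  inv_val := by rw [← pow_succ, cB_pow3]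

/-- `b` as a unit of the endomorphism ring. -/
noncomputable def Bu : (Module.End (ZMod 2) (F4 × F4))ˣ where
  val := bB
  inv := bB ^ 3
  val_inv := by rw [← pow_succ', bB_pow4]
  inv_val := by rw [← pow_succ, bB_pow4]

noncomputable def fgen : Fin 2 → (Module.End (ZMod 2) (F4 × F4))ˣ := ![Cu, Bu]

lemma Cu3 : Cu ^ 3 = 1 := Units.ext (by rw [Units.val_pow_eq_pow_val]; exact cB_pow3)

lemma Bu4 : Bu ^ 4 = 1 := Units.ext (by rw [Units.val_pow_eq_pow_val]; exact bB_pow4)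

lemma BuCu : Bu * Cu = Cu ^ 2 * Bu := Units.ext (by
  rw [Units.val_mul, Units.val_mul, Units.val_pow_eq_pow_val]
  exact bB_cB)

lemma hrels : ∀ r ∈ sdRels, FreeGroup.lift fgen r = 1 := by
  rintro r (rfl | rfl | rfl)
  · rw [map_pow, FreeGroup.lift_apply_of]
    exact Cu3
  · rw [map_pow, FreeGroup.lift_apply_of]
    exact Bu4
  · rw [map_mul, map_inv, map_mul, map_mul, map_pow, FreeGroup.lift_apply_of, FreeGroup.lift_apply_of,
      mul_inv_eq_one]
    exact BuCu

/-- The homomorphism to the unit group. -/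
noncomputable def Phi : PresentedGroup sdRels →* (Module.End (ZMod 2) (F4 × F4))ˣ :=
  PresentedGroup.toGroup hrels

lemma Phi_c : Phi (PresentedGroup.of 0) = Cu := PresentedGroup.toGroup.of hrels

lemma Phi_b : Phi (PresentedGroup.of 1) = Bu := PresentedGroup.toGroup.of hrels

/-- relations in the presented group -/
lemma rel_mk : ∀ r ∈ sdRels, PresentedGroup.mk sdRels r = 1 := fun r hr =>
  (QuotientGroup.eq_one_iff r).mpr (Subgroup.subset_normalClosure hr)

lemma rel_c3 : (PresentedGroup.of 0 : PresentedGroup sdRels) ^ 3 = 1 := by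
  have := rel_mk _ (show FreeGroup.of 0 ^ 3 ∈ sdRels from Or.inl rfl)
  rwa [map_pow] at this

lemma rel_b4 : (PresentedGroup.of 1 : PresentedGroup sdRels) ^ 4 = 1 := by
  have := rel_mk _ (show FreeGroup.of 1 ^ 4 ∈ sdRels from Or.inr (Or.inl rfl))
  rwa [map_pow] at this

lemma rel_bc : (PresentedGroup.of 1 : PresentedGroup sdRels) * PresentedGroup.of 0
    = PresentedGroup.of 0 ^ 2 * PresentedGroup.of 1 := by
  have := rel_mk _ (show FreeGroup.of 1 * FreeGroup.of 0 *
    (FreeGroup.of 0 ^ 2 * FreeGroup.of 1)⁻¹ ∈ sdRels from Or.inr (Or.inr rfl))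
  rw [map_mul, map_inv, map_mul, map_mul, map_pow, mul_inv_eq_one] at this
  exact this

section NormalForm

noncomputable def cg : PresentedGroup sdRels := PresentedGroup.of 0
noncomputable def bg : PresentedGroup sdRels := PresentedGroup.of 1

lemma rel_c3' : cg ^ 3 = 1 := rel_c3
lemma rel_b4' : bg ^ 4 = 1 := rel_b4
lemma rel_bc' : bg * cg = cg ^ 2 * bg := rel_bc

lemma bc_pow (k : ℕ) : bg * cg ^ k = cg ^ (2 * k) * bg := by
  induction k with
  | zero => simp
  | succ n ih =>
    calc bg * cg ^ (n + 1) = bg * cg ^ n * cg := by rw [pow_succ, mul_assoc]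
    _ = cg ^ (2 * n) * (bg * cg) := by rw [ih, mul_assoc]
    _ = cg ^ (2 * n) * (cg ^ 2 * bg) := by rw [rel_bc']
    _ = cg ^ (2 * (n + 1)) * bg := by rw [← mul_assoc, ← pow_add]; ring_nf

lemma bpow_cpow (j : ℕ) : ∀ k : ℕ, bg ^ j * cg ^ k = cg ^ (2 ^ j * k) * bg ^ j := by
  induction j with
  | zero => intro k; simp
  | succ n ih =>
    intro k
    calc bg ^ (n + 1) * cg ^ k = bg ^ n * (bg * cg ^ k) := by
          rw [pow_succ, mul_assoc]
    _ = bg ^ n * cg ^ (2 * k) * bg := by rw [bc_pow, ← mul_assoc]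
    _ = cg ^ (2 ^ n * (2 * k)) * bg ^ n * bg := by rw [ih (2 * k)]
    _ = cg ^ (2 ^ (n + 1) * k) * bg ^ (n + 1) := by
          rw [mul_assoc, ← pow_succ, show 2 ^ n * (2 * k) = 2 ^ (n + 1) * k by ring]

lemma exists_rep (g : PresentedGroup sdRels) : ∃ i j : ℕ, g = cg ^ i * bg ^ j := by
  obtain ⟨w, rfl⟩ := PresentedGroup.mk_surjective sdRels g
  induction w using FreeGroup.induction_on with
  | C1 => exact ⟨0, 0, by simp⟩
  | of x =>
    fin_cases x
    · exact ⟨1, 0, by rw [pow_one, pow_zero, mul_one]; rfl⟩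
    · exact ⟨0, 1, by rw [pow_one, pow_zero, one_mul]; rfl⟩
  | inv_of x _ =>
    fin_cases x
    · refine ⟨2, 0, ?_⟩
      show (PresentedGroup.mk sdRels) ((FreeGroup.of 0)⁻¹) = cg ^ 2 * bg ^ 0
      have h2 : cg⁻¹ = cg ^ 2 := by
        rw [inv_eq_iff_mul_eq_one, ← pow_succ']
        exact rel_c3'
      rw [map_inv, show (PresentedGroup.mk sdRels) (FreeGroup.of 0) = cg from rfl, h2,
        pow_zero, mul_one]
    · refine ⟨0, 3, ?_⟩
      show (PresentedGroup.mk sdRels) ((FreeGroup.of 1)⁻¹) = cg ^ 0 * bg ^ 3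
      have h2 : bg⁻¹ = bg ^ 3 := by
        rw [inv_eq_iff_mul_eq_one, ← pow_succ']
        exact rel_b4'
      rw [map_inv, show (PresentedGroup.mk sdRels) (FreeGroup.of 1) = bg from rfl, h2,
        pow_zero, one_mul]
  | mul x y hx hy =>
    obtain ⟨i, j, hij⟩ := hx
    obtain ⟨k, l, hkl⟩ := hy
    refine ⟨i + 2 ^ j * k, j + l, ?_⟩
    rw [map_mul, hij, hkl]
    calc cg ^ i * bg ^ j * (cg ^ k * bg ^ l)
        = cg ^ i * (bg ^ j * cg ^ k) * bg ^ l := by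
          rw [mul_assoc, mul_assoc, mul_assoc]
    _ = cg ^ i * (cg ^ (2 ^ j * k) * bg ^ j) * bg ^ l := by rw [bpow_cpow]
    _ = cg ^ (i + 2 ^ j * k) * bg ^ (j + l) := by
          rw [pow_add, pow_add]
          rw [mul_assoc, mul_assoc, mul_assoc]

lemma exists_rep' (g : PresentedGroup sdRels) :
    ∃ i j : ℕ, i < 3 ∧ j < 4 ∧ g = cg ^ i * bg ^ j := by
  obtain ⟨i, j, rfl⟩ := exists_rep g
  refine ⟨i % 3, j % 4, Nat.mod_lt _ (by norm_num), Nat.mod_lt _ (by norm_num), ?_⟩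
  conv_lhs => rw [← Nat.div_add_mod i 3, ← Nat.div_add_mod j 4]
  rw [pow_add, pow_mul, rel_c3', one_pow, one_mul, pow_add, pow_mul, rel_b4', one_pow, one_mul]

end NormalForm

lemma pow_two_end (T : Module.End (ZMod 2) (F4 × F4)) : T ^ 2 = T * T := sq T
lemma pow_three_end (T : Module.End (ZMod 2) (F4 × F4)) : T ^ 3 = T * T * T := by
  have h : T ^ 3 = T ^ 2 * T := pow_succ T 2
  rw [h, pow_two_end]

lemma Phi_ker : ∀ g : PresentedGroup sdRels, Phi g = 1 → g = 1 := by
  intro g hg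
  obtain ⟨i, j, hi, hj, rfl⟩ := exists_rep' g
  have hPhi : Phi (cg ^ i * bg ^ j) = Cu ^ i * Bu ^ j := by
    rw [map_mul, map_pow, map_pow, show Phi cg = Cu from Phi_c, show Phi bg = Bu from Phi_b]
  rw [hPhi] at hg
  have hval := congrArg Units.val hg
  rw [Units.val_mul, Units.val_pow_eq_pow_val, Units.val_pow_eq_pow_val, Units.val_one] at hval
  have hE1 : (cB ^ i * bB ^ j) ((0 : F4), (1 : F4)) = ((0 : F4), (1 : F4)) := by
    rw [show (Cu.val : Module.End (ZMod 2) (F4 × F4)) = cB from rfl,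
      show (Bu.val : Module.End (ZMod 2) (F4 × F4)) = bB from rfl] at hval
    rw [hval]; rfl
  interval_cases i <;> interval_cases j <;>
    simp only [pow_two_end, pow_three_end, pow_zero, pow_one, one_mul, mul_one,
      Module.End.mul_apply, Module.End.one_apply, cB_apply, bB_apply, Prod.mk.injEq] at hE1 ⊢
  · exfalso; exact one_ne_zero (by linear_combination hE1.1)
  · exfalso; exact gam_ne_zero (by linear_combination hgam - hE1.1)
  · exfalso; exact gam_ne_zero (by linear_combination hE1.1 - pow4 gam
      - (gam ^ 3 + 1) * gam3 - htwo - gam ^ 2 * htwo)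
  · exfalso; exact gam_ne_one (by linear_combination hE1.2)
  · exfalso; exact gam_ne_zero (by linear_combination hE1.1)
  · exfalso; exact gam_ne_one (by linear_combination - hE1.1 + gam3 + gam * htwo)
  · exfalso; exact gam_pow_ne_zero 2 (by linear_combination hE1.1 - gam * (pow4 gam)
      - gam * (gam ^ 3 + 1) * gam3 - gam * htwo - gam ^ 3 * htwo)
  · exfalso; exact gam_sq_ne_one (by linear_combination hE1.2)
  · exfalso; exact gam_pow_ne_zero 2 (by linear_combination hE1.1)
  · exfalso; exact one_ne_zero (by linear_combination hgam - hE1.1 + gam * gam3)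
  · exfalso; exact one_ne_zero (by linear_combination hE1.1 - gam ^ 2 * (pow4 gam)
      - gam ^ 2 * (gam ^ 3 + 1) * gam3 - gam ^ 2 * htwo - gam ^ 4 * htwo - gam3)

noncomputable def phi : Representation (ZMod 2) (PresentedGroup sdRels) (F4 × F4) :=
  (Units.coeHom (Module.End (ZMod 2) (F4 × F4))).comp Phi

lemma phi_c : phi (PresentedGroup.of 0) = cB := by
  rw [phi, MonoidHom.comp_apply, Phi_c]; rfl

lemma phi_b : phi (PresentedGroup.of 1) = bB := by
  rw [phi, MonoidHom.comp_apply, Phi_b]; rfl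

lemma phi_injective : Function.Injective phi := by
  have hPhi : Function.Injective Phi := (injective_iff_map_eq_one Phi).mpr Phi_ker
  intro a b hab
  exact hPhi (Units.ext hab)

lemma E_apply (r : R4) :
    LinearEquiv.ofBijective e0 ⟨e0_injective, e0_surjective⟩ r = e0 r := rfl

lemma e0_v1 : e0 (1 + bbar + bbar ^ 2 + bbar ^ 3) = ((1 : F4), (0 : F4)) := by
  rw [map_add, map_add, map_add, e0_one, e0_b, e0_b2, e0_b3]
  refine Prod.ext ?_ ?_ <;> simp only [Prod.fst_add, Prod.snd_add]
  · linear_combination gam * htwo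
  · linear_combination (1 + gam) * htwo

lemma e0_vg : e0 (1 + bbar ^ 2) = (gam, (0 : F4)) := by
  rw [map_add, e0_one, e0_b2]
  refine Prod.ext ?_ ?_ <;> simp only [Prod.fst_add, Prod.snd_add]
  · ring
  · linear_combination htwo

lemma e0_vcx : e0 (1 + bbar ^ 2 + bbar ^ 3) = ((0 : F4), gam) := by
  rw [map_add, map_add, e0_one, e0_b2, e0_b3]
  refine Prod.ext ?_ ?_ <;> simp only [Prod.fst_add, Prod.snd_add]
  · linear_combination gam * htwo
  · linear_combination htwo

/-- `U₄ = F₄ ⊕ F₄·x` with `c` acting by multiplication and `b·1 = 1, b·c = c²,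
b·x = 1 + c·x` (so `b·(u,v) = (u² + v², c·v²)`) is a well-defined faithful
4-dimensional `F₂`-representation of `Γ_Δ`, and its restriction to `C₄ = ⟨b⟩` is
isomorphic to the regular representation `F₂[b]/(b+1)⁴` via
`1 ↦ 1+b+b²+b³`, `c ↦ 1+b²`, `x ↦ 1`, `cx ↦ 1+b²+b³`. -/
theorem stmt_13 :
    ∃ φ : Representation (ZMod 2) (PresentedGroup sdRels) (F4 × F4),
      Function.Injective φ ∧
      Module.finrank (ZMod 2) (F4 × F4) = 4 ∧
      (∀ u v : F4, φ (PresentedGroup.of 0) (u, v) = (gam * u, gam * v)) ∧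
      (∀ u v : F4, φ (PresentedGroup.of 1) (u, v) =
        (u ^ 2 + v ^ 2, gam * v ^ 2)) ∧
      ∃ e : (F4 × F4) ≃ₗ[ZMod 2] R4,
        (∀ w, e (φ (PresentedGroup.of 1) w) = bbar * e w) ∧
        e (1, 0) = 1 + bbar + bbar ^ 2 + bbar ^ 3 ∧
        e (gam, 0) = 1 + bbar ^ 2 ∧
        e (0, 1) = 1 ∧
        e (0, gam) = 1 + bbar ^ 2 + bbar ^ 3 := by
  refine ⟨phi, phi_injective, finrank_prod_F4, ?_, ?_, ?_⟩
  · intro u v; rw [phi_c, cB_apply]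
  · intro u v; rw [phi_b, bB_apply]
  · set E := LinearEquiv.ofBijective e0 ⟨e0_injective, e0_surjective⟩ with hE
    refine ⟨E.symm, ?_, ?_, ?_, ?_, ?_⟩
    · intro w
      rw [phi_b, LinearEquiv.symm_apply_eq, E_apply, e0_mul]
      congr 1
      exact ((E_apply (E.symm w)).symm.trans (E.apply_symm_apply w)).symm
    · rw [LinearEquiv.symm_apply_eq, E_apply, e0_v1]
    · rw [LinearEquiv.symm_apply_eq, E_apply, e0_vg]
    · rw [LinearEquiv.symm_apply_eq, E_apply, e0_one]
    · rw [LinearEquiv.symm_apply_eq, E_apply, e0_vcx]
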